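/- arXiv:1911.00495 — 2 statements merged into one kernel-verified Lean document; each statement's English description precedes it below -/
import Mathlib

section
/- The function y(x) = 2 * log((4 - 2*sqrt 2) / ((3 - 2*sqrt 2) * x^2 + 1)) satisfies y''(x) + (1/x) y'(x) + exp(y(x)) = 0 for all x > 0, with y'(0) = 0 and y(1) = 0. -/
open Real

theorem thermal_explosion_exact_solution :
    let y : ℝ → ℝ := fun x =>
      2 * Real.log ((4 - 2 * Real.sqrt 2) / ((3 - 2 * Real.sqrt 2) * x ^ 2 + 1))
    (∀ x : ℝ, 0 < x →
      deriv (deriv y) x + (1 / x) * deriv y x + Real.exp (y x) = 0) ∧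
    deriv y 0 = 0 ∧ y 1 = 0 := by
  intro y
  set s := Real.sqrt 2 with hsdef
  have hs : s ^ 2 = 2 := Real.sq_sqrt (by norm_num)
  have hsnn : 0 ≤ s := Real.sqrt_nonneg 2
  have hB : 0 < 3 - 2 * s := by nlinarith
  have hA : 0 < 4 - 2 * s := by nlinarith
  have hden : ∀ x : ℝ, 0 < (3 - 2 * s) * x ^ 2 + 1 := fun x => by nlinarith [sq_nonneg x]
  -- rewrite y
  have hyeq : y = fun x => 2 * Real.log (4 - 2 * s) - 2 * Real.log ((3 - 2 * s) * x ^ 2 + 1) := by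
    funext x
    show 2 * Real.log ((4 - 2 * s) / ((3 - 2 * s) * x ^ 2 + 1)) = _
    rw [Real.log_div hA.ne' (hden x).ne']
    ring
  have hy' : ∀ x : ℝ, HasDerivAt y (-4 * (3 - 2 * s) * x / ((3 - 2 * s) * x ^ 2 + 1)) x := by
    intro x
    have h1 : HasDerivAt (fun x : ℝ => (3 - 2 * s) * x ^ 2 + 1) (2 * (3 - 2 * s) * x) x := by
      have := ((hasDerivAt_pow 2 x).const_mul (3 - 2 * s)).add_const 1
      simpa [mul_comm, mul_assoc, mul_left_comm] using this
    have h2 := h1.log (hden x).ne'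
    have h3 := (h2.const_mul (2 : ℝ)).const_sub (2 * Real.log (4 - 2 * s))
    rw [hyeq]
    rw [show -4 * (3 - 2 * s) * x / ((3 - 2 * s) * x ^ 2 + 1) =
      -(2 * (2 * (3 - 2 * s) * x / ((3 - 2 * s) * x ^ 2 + 1))) by ring]
    exact h3
  have hderiv : deriv y = fun x => -4 * (3 - 2 * s) * x / ((3 - 2 * s) * x ^ 2 + 1) := by
    funext x
    exact (hy' x).deriv
  refine ⟨?_, ?_, ?_⟩
  · intro x hx
    -- second derivative
    have h1 : HasDerivAt (fun x : ℝ => -4 * (3 - 2 * s) * x) (-4 * (3 - 2 * s)) x := by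
      simpa using (hasDerivAt_id x).const_mul (-4 * (3 - 2 * s))
    have h2 : HasDerivAt (fun x : ℝ => (3 - 2 * s) * x ^ 2 + 1) (2 * (3 - 2 * s) * x) x := by
      have := ((hasDerivAt_pow 2 x).const_mul (3 - 2 * s)).add_const 1
      simpa [mul_comm, mul_assoc, mul_left_comm] using this
    have h3 := h1.div h2 (hden x).ne'
    have hdd : deriv (deriv y) x =
        ((-4 * (3 - 2 * s)) * ((3 - 2 * s) * x ^ 2 + 1) -
          (-4 * (3 - 2 * s) * x) * (2 * (3 - 2 * s) * x)) / ((3 - 2 * s) * x ^ 2 + 1) ^ 2 := by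
      rw [hderiv]
      exact h3.deriv
    have hexp : Real.exp (y x) = ((4 - 2 * s) / ((3 - 2 * s) * x ^ 2 + 1)) ^ 2 := by
      have hpos : 0 < (4 - 2 * s) / ((3 - 2 * s) * x ^ 2 + 1) := div_pos hA (hden x)
      show Real.exp (2 * Real.log ((4 - 2 * s) / ((3 - 2 * s) * x ^ 2 + 1))) = _
      rw [show (2 : ℝ) * Real.log ((4 - 2 * s) / ((3 - 2 * s) * x ^ 2 + 1)) =
        Real.log (((4 - 2 * s) / ((3 - 2 * s) * x ^ 2 + 1)) ^ 2) by
          rw [Real.log_pow]; push_cast; ring]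
      exact Real.exp_log (by positivity)
    rw [hdd, hderiv, hexp]
    have hd := (hden x).ne'
    field_simp
    linear_combination 4 * hs
  · rw [hderiv]; simp
  · show 2 * Real.log ((4 - 2 * s) / ((3 - 2 * s) * 1 ^ 2 + 1)) = 0
    rw [show (3 - 2 * s) * 1 ^ 2 + 1 = 4 - 2 * s by ring, div_self hA.ne', Real.log_one, mul_zero]
end

section
/- Let ψ_{n,m}(t) = 2^{k/2} * (1/sqrt(n! * 2^n * sqrt(π))) * H_m(2^k t - (2n-1)) * χ_{[(2n-2)/2^k, 2n/2^k)}(t) be the Hermite wavelet on [0,1]. If f : [0,1] → ℝ is measurable with |f(t)| ≤ η for all t ∈ [0,1], then the coefficient c_{nm} = ∫_0^1 f(t) ψ_{n,m}(t) dt satisfies |c_{nm}| ≤ 2^{-k/2} * η * h / (sqrt(n! * 2^n * sqrt(π)) * (m+1)), where h = ∫_{-1}^1 |H_{m+1}'(y)| dy. -/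
open Real MeasureTheory

noncomputable def hermiteH : ℕ → ℝ → ℝ
  | 0, _ => 1
  | 1, t => 2 * t
  | (m + 2), t => 2 * t * hermiteH (m + 1) t - 2 * (m + 1) * hermiteH m t

lemma hermite_hasDerivAt_aux (m : ℕ) :
    (∀ y : ℝ, HasDerivAt (hermiteH (m+1)) (2 * ((m:ℝ)+1) * hermiteH m y) y) ∧
    (∀ y : ℝ, HasDerivAt (hermiteH (m+2)) (2 * ((m:ℝ)+2) * hermiteH (m+1) y) y) := by
  induction m with
  | zero =>
    constructor
    · intro y
      have h0 : HasDerivAt (fun t : ℝ => 2 * t) 2 y := by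
        simpa using (hasDerivAt_id y).const_mul 2
      have he : hermiteH 1 = fun t : ℝ => 2 * t := funext fun t => by rw [hermiteH]
      rw [he]
      refine h0.congr_deriv ?_
      rw [show hermiteH 0 y = 1 from by rw [hermiteH]]
      norm_num
    · intro y
      have he : hermiteH 2 = fun t : ℝ => 2 * t * (2 * t) - 2 * 1 * 1 := by
        funext t; rw [hermiteH]
        rw [show hermiteH 1 t = 2*t from by rw [hermiteH],
            show hermiteH 0 t = 1 from by rw [hermiteH]]
        norm_num
      rw [he]
      have h0 : HasDerivAt (fun t : ℝ => 2 * t) 2 y := by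
        simpa using (hasDerivAt_id y).const_mul 2
      have hd := (h0.mul h0).sub_const (2 * 1 * 1 : ℝ)
      refine hd.congr_deriv ?_
      rw [show hermiteH 1 y = 2*y from by rw [hermiteH]]
      norm_num; ring
  | succ m ih =>
    constructor
    · intro y
      exact (ih.2 y).congr_deriv (by push_cast; ring)
    · intro y
      have h1 := ih.1 y
      have h2 := ih.2 y
      have he : hermiteH (m+3) = fun t : ℝ =>
          2 * t * hermiteH (m+2) t - 2 * ((m:ℝ)+2) * hermiteH (m+1) t := by
        funext t
        rw [show m + 3 = (m+1) + 2 from rfl, hermiteH]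
        push_cast; ring
      rw [he]
      have h0 : HasDerivAt (fun t : ℝ => 2 * t) 2 y := by
        simpa using (hasDerivAt_id y).const_mul 2
      have hd := (h0.mul h2).sub (h1.const_mul (2 * ((m:ℝ)+2)))
      refine hd.congr_deriv ?_
      have hrec : hermiteH (m+2) y = 2 * y * hermiteH (m+1) y - 2 * ((m:ℝ)+1) * hermiteH m y := by
        rw [hermiteH]
      rw [hrec]
      push_cast; ring

lemma hermite_hasDerivAt (m : ℕ) (y : ℝ) :
    HasDerivAt (hermiteH (m+1)) (2 * ((m:ℝ)+1) * hermiteH m y) y :=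
  (hermite_hasDerivAt_aux m).1 y

lemma hermite_continuous (m : ℕ) : Continuous (hermiteH m) := by
  cases m with
  | zero => rw [show hermiteH 0 = fun _ : ℝ => 1 from funext fun t => by rw [hermiteH]]
            exact continuous_const
  | succ m =>
    exact continuous_iff_continuousAt.2 fun y => (hermite_hasDerivAt m y).continuousAt

/-- The Hermite wavelet `ψ_{n,m}` at resolution level `k` on `[0,1]`. -/
noncomputable def hermiteWavelet (k n m : ℕ) (t : ℝ) : ℝ :=
  if t ∈ Set.Ico (((2 : ℝ) * n - 2) / 2 ^ k) ((2 * n) / 2 ^ k) then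
    (2 : ℝ) ^ ((k : ℝ) / 2) * (1 / Real.sqrt (n.factorial * 2 ^ n * Real.sqrt π)) *
      hermiteH m (2 ^ k * t - (2 * n - 1))
  else 0

theorem hermite_wavelet_coeff_bound (k n m : ℕ) (hk : 1 ≤ k) (hn1 : 1 ≤ n)
    (hn2 : n ≤ 2 ^ (k - 1)) (f : ℝ → ℝ) (hf : Measurable f) (η : ℝ)
    (hη : ∀ t ∈ Set.Icc (0 : ℝ) 1, |f t| ≤ η) :
    |∫ t in (0 : ℝ)..1, f t * hermiteWavelet k n m t| ≤
      (2 : ℝ) ^ (-(k : ℝ) / 2) * η * (∫ y in (-1 : ℝ)..1, |deriv (hermiteH (m + 1)) y|) /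
        (Real.sqrt (n.factorial * 2 ^ n * Real.sqrt π) * (m + 1)) := by
  set S : ℝ := Real.sqrt (n.factorial * 2 ^ n * Real.sqrt π) with hSdef
  have hS : 0 < S := Real.sqrt_pos.2 (by
    positivity)
  set a : ℝ := ((2 : ℝ) * n - 2) / 2 ^ k with hadef
  set b : ℝ := ((2 : ℝ) * n) / 2 ^ k with hbdef
  set C : ℝ := (2 : ℝ) ^ ((k : ℝ) / 2) * (1 / S) with hCdef
  have hC : 0 ≤ C := by positivity
  have h2k : (0:ℝ) < 2 ^ k := by positivity
  have h2n : (2:ℝ) * n ≤ 2 ^ k := by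
    have : 2 * n ≤ 2 ^ k := by
      calc 2 * n ≤ 2 * 2 ^ (k-1) := by omega
        _ = 2 ^ (k - 1 + 1) := (pow_succ 2 (k-1)).symm ▸ by ring
        _ = 2 ^ k := by congr 1; omega
    exact_mod_cast this
  have ha0 : 0 ≤ a := by
    apply div_nonneg _ h2k.le
    have : (1:ℝ) ≤ n := by exact_mod_cast hn1
    linarith
  have hab : a ≤ b := by
    rw [hadef, hbdef]
    gcongr
    linarith
  have hb1 : b ≤ 1 := by
    rw [hbdef, div_le_one h2k]; exact h2n
  set g : ℝ → ℝ := fun t => C * hermiteH m (2 ^ k * t - (2 * n - 1)) with hgdef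
  have hgc : Continuous g :=
    continuous_const.mul ((hermite_continuous m).comp (by continuity))
  have hη0 : 0 ≤ η := le_trans (abs_nonneg _) (hη 0 (by norm_num))
  -- Step A : reduce to the support interval
  have hstepA : (∫ t in (0:ℝ)..1, f t * hermiteWavelet k n m t) = ∫ t in a..b, f t * g t := by
    have hψ : ∀ t, f t * hermiteWavelet k n m t
        = Set.indicator (Set.Ico a b) (fun t => f t * g t) t := by
      intro t
      rw [hermiteWavelet, Set.indicator]
      split_ifs with h
      · rfl
      · exact mul_zero _
    simp_rw [hψ]
    rw [intervalIntegral.integral_of_le (by norm_num : (0:ℝ) ≤ 1),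
      setIntegral_indicator measurableSet_Ico,
      intervalIntegral.integral_of_le hab]
    apply setIntegral_congr_set
    have h1 : (Set.Ioc (0:ℝ) 1 ∩ Set.Ico a b : Set ℝ) =ᵐ[volume] (Set.Ioc (0:ℝ) 1 ∩ Set.Ioc a b : Set ℝ) :=
      MeasureTheory.ae_eq_set_inter (MeasureTheory.ae_eq_refl _) MeasureTheory.Ico_ae_eq_Ioc
    rwa [Set.Ioc_inter_Ioc, max_eq_right ha0, min_eq_right hb1] at h1
  rw [hstepA]
  -- integrability
  obtain ⟨M, hM⟩ : ∃ M, ∀ t ∈ Set.uIcc a b, ‖g t‖ ≤ M :=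
    isCompact_uIcc.exists_bound_of_continuousOn hgc.continuousOn
  have hFint : IntervalIntegrable (fun t => f t * g t) volume a b := by
    rw [intervalIntegrable_iff]
    apply MeasureTheory.Measure.integrableOn_of_bounded (M := η * M)
    · rw [Set.uIoc_of_le hab]; exact measure_Ioc_lt_top.ne
    · exact (hf.mul (hgc.measurable)).aestronglyMeasurable
    · rw [ae_restrict_iff' measurableSet_uIoc]
      refine MeasureTheory.ae_of_all _ fun t ht => ?_
      rw [Set.uIoc_of_le hab] at ht
      have ht' : t ∈ Set.Icc (0:ℝ) 1 := ⟨le_trans ha0 ht.1.le, le_trans ht.2 hb1⟩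
      have h1 : |f t| ≤ η := hη t ht'
      have h2 : ‖g t‖ ≤ M := hM t (Set.mem_uIcc_of_le ht.1.le ht.2)
      have hM0 : 0 ≤ M := le_trans (norm_nonneg _) h2
      calc ‖f t * g t‖ = |f t| * ‖g t‖ := by rw [norm_mul]; rfl
        _ ≤ η * M := mul_le_mul h1 h2 (norm_nonneg _) hη0
  have hGint : IntervalIntegrable (fun t => η * |g t|) volume a b :=
    (continuous_const.mul hgc.abs).intervalIntegrable _ _
  have hstepB : |∫ t in a..b, f t * g t| ≤ ∫ t in a..b, η * |g t| := by
    refine (intervalIntegral.abs_integral_le_integral_abs hab).trans ?_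
    refine intervalIntegral.integral_mono_on hab hFint.abs hGint fun t ht => ?_
    rw [abs_mul]
    exact mul_le_mul_of_nonneg_right (hη t ⟨le_trans ha0 ht.1, le_trans ht.2 hb1⟩)
      (abs_nonneg _)
  have hcomp : (∫ t in a..b, |hermiteH m (2 ^ k * t - (2 * (n:ℝ) - 1))|)
      = ((2:ℝ)^k)⁻¹ * ∫ y in (-1:ℝ)..1, |hermiteH m y| := by
    have h := intervalIntegral.integral_comp_mul_sub (a := a) (b := b)
      (fun y => |hermiteH m y|) (ne_of_gt h2k) ((2:ℝ)*n - 1)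
    rw [show (2:ℝ)^k * a - (2*(n:ℝ) - 1) = -1 by rw [hadef]; field_simp; norm_num; ring,
        show (2:ℝ)^k * b - (2*(n:ℝ) - 1) = 1 by rw [hbdef]; field_simp; try norm_num] at h
    rw [h, smul_eq_mul]
  have hstepC : (∫ t in a..b, η * |g t|)
      = η * C * (((2:ℝ)^k)⁻¹ * ∫ y in (-1:ℝ)..1, |hermiteH m y|) := by
    rw [intervalIntegral.integral_const_mul]
    have habs : ∀ t, |g t| = C * |hermiteH m (2 ^ k * t - (2 * (n:ℝ) - 1))| := fun t => by
      rw [hgdef]; exact (abs_mul _ _).trans (by rw [abs_of_nonneg hC])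
    simp_rw [habs]
    rw [intervalIntegral.integral_const_mul, hcomp]; ring
  have hderiv : deriv (hermiteH (m+1)) = fun y => 2*((m:ℝ)+1) * hermiteH m y :=
    funext fun y => (hermite_hasDerivAt m y).deriv
  have hstepD : (∫ y in (-1:ℝ)..1, |deriv (hermiteH (m+1)) y|)
      = 2*((m:ℝ)+1) * ∫ y in (-1:ℝ)..1, |hermiteH m y| := by
    rw [hderiv]
    have habs : ∀ y : ℝ, |2*((m:ℝ)+1) * hermiteH m y| = 2*((m:ℝ)+1) * |hermiteH m y| :=
      fun y => by rw [abs_mul, abs_of_nonneg (by positivity : (0:ℝ) ≤ 2*((m:ℝ)+1))]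
    simp_rw [habs]
    exact intervalIntegral.integral_const_mul _ _
  set I := ∫ y in (-1:ℝ)..1, |hermiteH m y| with hIdef
  have hI : 0 ≤ I := intervalIntegral.integral_nonneg (by norm_num) (fun y _ => abs_nonneg _)
  rw [hstepD]
  have hpow : (2:ℝ)^((k:ℝ)/2) * ((2:ℝ)^k)⁻¹ = (2:ℝ)^(-(k:ℝ)/2) := by
    rw [← Real.rpow_natCast 2 k, ← Real.rpow_neg (by norm_num : (0:ℝ) ≤ 2),
      ← Real.rpow_add (by norm_num : (0:ℝ) < 2)]
    congr 1; ring
  have key : η * C * (((2:ℝ)^k)⁻¹ * I) = (2:ℝ)^(-(k:ℝ)/2) * (η * I / S) := by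
    calc η * C * (((2:ℝ)^k)⁻¹ * I)
        = (2:ℝ)^((k:ℝ)/2) * ((2:ℝ)^k)⁻¹ * (η * I / S) := by rw [hCdef]; ring
      _ = (2:ℝ)^(-(k:ℝ)/2) * (η * I / S) := by rw [hpow]
  have hm1 : ((m:ℝ)+1) ≠ 0 := by positivity
  have hrhs : (2:ℝ)^(-(k:ℝ)/2) * η * (2*((m:ℝ)+1)*I) / (S*((m:ℝ)+1))
      = 2 * ((2:ℝ)^(-(k:ℝ)/2) * (η * I / S)) := by
    field_simp
  have hX : 0 ≤ (2:ℝ)^(-(k:ℝ)/2) * (η * I / S) := by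
    exact mul_nonneg (Real.rpow_nonneg (by norm_num) _)
      (div_nonneg (mul_nonneg hη0 hI) hS.le)
  calc |∫ t in a..b, f t * g t| ≤ η * C * (((2:ℝ)^k)⁻¹ * I) :=
        hstepB.trans (le_of_eq hstepC)
    _ = (2:ℝ)^(-(k:ℝ)/2) * (η * I / S) := key
    _ ≤ 2 * ((2:ℝ)^(-(k:ℝ)/2) * (η * I / S)) := by linarith
    _ = (2:ℝ)^(-(k:ℝ)/2) * η * (2*((m:ℝ)+1)*I) / (S*((m:ℝ)+1)) := hrhs.symm
end
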